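/- Let (M,d,ℓ) be a causal geodesic space, q ∈ (0,1], and η a Borel probability measure on the space of timelike ℓ-geodesics TGeo^ℓ(M) such that γ = (e₀ × e₁)_# η is an ℓ_q-optimal timelike coupling of μ₀ = (e₀)_# η and μ₁ = (e₁)_# η with ℓ_q(μ₀,μ₁) ∈ (-∞,0). Then t ↦ μ_t := (e_t)_# η is a timelike ℓ_q-path: ℓ_q(μ_s, μ_t) = (t-s) ℓ_q(μ₀, μ₁) for all 0 ≤ s < t ≤ 1. -/

import Mathlib

open Set MeasureTheory
open scoped ENNReal

/-- The Lorentzian length of a path `σ` over `[a,b]`. -/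
noncomputable def LorLen {M : Type*} (ℓ : M → M → EReal) (σ : ℝ → M) (a b : ℝ) : EReal :=
  sSup {v : EReal | ∃ (N : ℕ) (s : ℕ → ℝ), s 0 = a ∧ s N = b ∧
    (∀ i < N, s i < s (i + 1)) ∧
    v = ∑ i ∈ Finset.range N, ℓ (σ (s i)) (σ (s (i + 1)))}

/-- A (rough, future-directed) causal path on `[0,1]`. -/
def IsCausalPath {M : Type*} (ℓ : M → M → EReal) (σ : ℝ → M) : Prop :=
  ∀ s t : ℝ, 0 ≤ s → s < t → t ≤ 1 → ℓ (σ s) (σ t) ≤ 0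

/-- A causal curve on `[0,1]`: a nonconstant causal path, locally Lipschitz in `d`. -/
def IsCausalCurve {M : Type*} [MetricSpace M] (ℓ : M → M → EReal) (σ : ℝ → M) : Prop :=
  IsCausalPath ℓ σ ∧
  (∀ t ∈ Icc (0:ℝ) 1, ∃ (K : NNReal) (U : Set ℝ), U ∈ nhdsWithin t (Icc (0:ℝ) 1) ∧
    LipschitzOnWith K σ U) ∧
  (∃ s ∈ Icc (0:ℝ) 1, ∃ t ∈ Icc (0:ℝ) 1, σ s ≠ σ t)

/-- An ℓ-curve: a causal curve realizing the time separation of its endpoints. -/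
def IsLCurve {M : Type*} [MetricSpace M] (ℓ : M → M → EReal) (σ : ℝ → M) : Prop :=
  IsCausalCurve ℓ σ ∧ LorLen ℓ σ 0 1 = ℓ (σ 0) (σ 1)

/-- A Lorentzian geodesic space: every pair x ≤ y with x ≠ y is joined by an ℓ-curve. -/
def IsGeodesicSpacetime {M : Type*} [MetricSpace M] (ℓ : M → M → EReal) : Prop :=
  ∀ x y : M, ℓ x y ≤ 0 → x ≠ y →
    ∃ σ : ℝ → M, IsLCurve ℓ σ ∧ σ 0 = x ∧ σ 1 = y

/-- Regularity: an ℓ-curve with timelike separated endpoints has no nonconstant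
null (lightlike) subsegment. -/
def IsRegularSpacetime {M : Type*} [MetricSpace M] (ℓ : M → M → EReal) : Prop :=
  ∀ σ : ℝ → M, IsLCurve ℓ σ → ℓ (σ 0) (σ 1) < 0 →
    ¬∃ c d : ℝ, 0 ≤ c ∧ c < d ∧ d ≤ 1 ∧
      (∀ s t : ℝ, c ≤ s → s < t → t ≤ d → ℓ (σ s) (σ t) = 0) ∧
      (∃ s ∈ Icc c d, σ s ≠ σ c)

/-- The set of timelike ℓ-geodesics: continuous paths affinely parameterized
(with respect to proper time) over `[0,1]`, with timelike separated endpoints. -/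
def TGeoSet {M : Type*} [MetricSpace M] (ℓ : M → M → EReal) : Set (ℝ → M) :=
  {σ | ContinuousOn σ (Icc (0:ℝ) 1) ∧ ⊥ < ℓ (σ 0) (σ 1) ∧ ℓ (σ 0) (σ 1) < 0 ∧
    ∀ s t : ℝ, 0 ≤ s → s < t → t ≤ 1 →
      ℓ (σ s) (σ t) = ((t - s : ℝ) : EReal) * ℓ (σ 0) (σ 1)}

/-- A causal coupling of μ and ν: a coupling giving full mass to {ℓ ≤ 0}. -/
def IsCausalCoupling {M : Type*} [MeasurableSpace M] (ℓ : M → M → EReal)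
    (μ ν : Measure M) (γ : Measure (M × M)) : Prop :=
  γ.map Prod.fst = μ ∧ γ.map Prod.snd = ν ∧ γ {p : M × M | ℓ p.1 p.2 ≤ 0} = 1

/-- The cost `-(∫ |ℓ|^q dγ)^{1/q}` of a coupling γ, valued in EReal. -/
noncomputable def lqCost {M : Type*} [MeasurableSpace M] (ℓ : M → M → EReal)
    (q : ℝ) (γ : Measure (M × M)) : EReal :=
  -((((∫⁻ p, (ENNReal.ofReal (-(ℓ p.1 p.2)).toReal) ^ q ∂γ) ^ (1 / q) : ℝ≥0∞) : EReal))

/-- The q-Lorentz–Wasserstein time separation `ℓ_q(μ,ν)`; it equals `+∞` when no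
causal coupling exists. -/
noncomputable def lqSep {M : Type*} [MeasurableSpace M] (ℓ : M → M → EReal)
    (q : ℝ) (μ ν : Measure M) : EReal :=
  sInf {v : EReal | ∃ γ : Measure (M × M), IsCausalCoupling ℓ μ ν γ ∧ v = lqCost ℓ q γ}


section Aux
open MeasureTheory ProbabilityTheory
open scoped ENNReal

lemma concav2 {q : ℝ} (hq0 : 0 < q) (hq1 : q ≤ 1) (w1 w2 z1 z2 : NNReal)
    (hw : w1 + w2 = 1) : w1 * z1 ^ q + w2 * z2 ^ q ≤ (w1 * z1 + w2 * z2) ^ q := by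
  have hp : 1 ≤ 1 / q := (le_div_iff₀ hq0).2 (by linarith)
  have h := NNReal.arith_mean_le_rpow_mean (s := Finset.univ) (ι := Fin 2)
    (w := ![w1, w2]) (z := ![z1 ^ q, z2 ^ q]) (by simp [Fin.sum_univ_two, hw]) hp
  simp only [Fin.sum_univ_two, Matrix.cons_val_zero, Matrix.cons_val_one, Matrix.head_cons] at h
  have h2 : (w1 * (z1 ^ q) ^ (1/q) + w2 * (z2 ^ q) ^ (1/q)) = w1 * z1 + w2 * z2 := by
    rw [← NNReal.rpow_mul, ← NNReal.rpow_mul, mul_one_div_cancel hq0.ne', NNReal.rpow_one,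
      NNReal.rpow_one]
  rw [h2, one_div_one_div] at h
  exact h

lemma ptwise {q : ℝ} (hq0 : 0 < q) (hq1 : q ≤ 1) (lam mu : ℝ≥0∞) (hlt : lam ≠ ⊤)
    (hmt : mu ≠ ⊤) (hl : lam + mu = 1) (u v : ℝ≥0∞) :
    lam ^ (1 - q) * u ^ q + mu ^ (1 - q) * v ^ q ≤ (u + v) ^ q := by
  rcases eq_or_lt_of_le hq1 with rfl | hq1'
  · simp only [sub_self, ENNReal.rpow_zero, one_mul, ENNReal.rpow_one]
    exact le_rfl
  have h1q : (0:ℝ) < 1 - q := by linarith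
  rcases eq_or_ne u ⊤ with hu | hu
  · have : (u + v) ^ q = ⊤ := by rw [hu, top_add, ENNReal.top_rpow_of_pos hq0]
    simp [this]
  rcases eq_or_ne v ⊤ with hv | hv
  · have : (u + v) ^ q = ⊤ := by rw [hv, add_top, ENNReal.top_rpow_of_pos hq0]
    simp [this]
  lift u to NNReal using hu
  lift v to NNReal using hv
  lift lam to NNReal using hlt
  lift mu to NNReal using hmt
  rw [← ENNReal.coe_add, ← ENNReal.coe_one, ENNReal.coe_inj] at hl
  rcases eq_or_ne lam 0 with rfl | h0
  · simp only [zero_add] at hl; subst hl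
    rw [ENNReal.coe_zero, ENNReal.zero_rpow_of_pos h1q, zero_mul, zero_add,
      ENNReal.coe_one, ENNReal.one_rpow, one_mul]
    exact ENNReal.rpow_le_rpow (le_add_left le_rfl) hq0.le
  rcases eq_or_ne mu 0 with rfl | h0'
  · simp only [add_zero] at hl; subst hl
    rw [ENNReal.coe_zero, ENNReal.zero_rpow_of_pos h1q, zero_mul, add_zero,
      ENNReal.coe_one, ENNReal.one_rpow, one_mul]
    exact ENNReal.rpow_le_rpow (le_add_right le_rfl) hq0.le
  have key := concav2 hq0 hq1 lam mu (u / lam) (v / mu) hl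
  rw [mul_div_cancel₀ u h0, mul_div_cancel₀ v h0'] at key
  have d1 : ∀ (w z : NNReal), w ≠ 0 → w * (z / w) ^ q = w ^ (1 - q) * z ^ q := by
    intro w z hw
    rw [NNReal.div_rpow, ← mul_div_assoc, NNReal.rpow_sub hw, NNReal.rpow_one,
      div_mul_eq_mul_div]
  rw [d1 lam u h0, d1 mu v h0'] at key
  calc (lam:ℝ≥0∞) ^ (1 - q) * (u:ℝ≥0∞) ^ q + (mu:ℝ≥0∞) ^ (1 - q) * (v:ℝ≥0∞) ^ q
      = ((lam ^ (1-q) * u ^ q + mu ^ (1-q) * v ^ q : NNReal) : ℝ≥0∞) := by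
        push_cast [ENNReal.coe_rpow_of_ne_zero h0, ENNReal.coe_rpow_of_ne_zero h0',
          ← ENNReal.coe_rpow_of_nonneg _ hq0.le]
        rfl
    _ ≤ (((u + v) ^ q : NNReal) : ℝ≥0∞) := ENNReal.coe_le_coe.2 key
    _ = ((u:ℝ≥0∞) + v) ^ q := by
        rw [ENNReal.coe_rpow_of_nonneg _ hq0.le, ENNReal.coe_add]
lemma revMink {α : Type*} [MeasurableSpace α] (μ : Measure α) {q : ℝ} (hq0 : 0 < q)
    (hq1 : q ≤ 1) (f g : α → ℝ≥0∞) (hf : Measurable f) (hg : Measurable g) :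
    (∫⁻ x, f x ^ q ∂μ) ^ (1/q) + (∫⁻ x, g x ^ q ∂μ) ^ (1/q)
      ≤ (∫⁻ x, (f x + g x) ^ q ∂μ) ^ (1/q) := by
  set A := ∫⁻ x, f x ^ q ∂μ with hA
  set B := ∫⁻ x, g x ^ q ∂μ with hB
  set S := ∫⁻ x, (f x + g x) ^ q ∂μ with hS
  have hAS : A ≤ S := lintegral_mono fun x => ENNReal.rpow_le_rpow (le_add_right le_rfl) hq0.le
  have hBS : B ≤ S := lintegral_mono fun x => ENNReal.rpow_le_rpow (le_add_left le_rfl) hq0.le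
  have hq0' : 0 < 1/q := by positivity
  have hmono : ∀ {x y : ℝ≥0∞}, x ≤ y → x ^ (1/q) ≤ y ^ (1/q) :=
    fun h => ENNReal.rpow_le_rpow h hq0'.le
  set a := A ^ (1/q)
  set b := B ^ (1/q)
  rcases eq_or_ne a 0 with ha0 | ha0
  · rw [ha0, zero_add]; exact hmono hBS
  rcases eq_or_ne b 0 with hb0 | hb0
  · rw [hb0, add_zero]; exact hmono hAS
  rcases eq_or_ne a ⊤ with hat | hat
  · have : A = ⊤ := by
      by_contra h
      exact (ENNReal.rpow_lt_top_of_nonneg hq0'.le h).ne hat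
    have : S = ⊤ := top_le_iff.mp (this ▸ hAS)
    rw [this, ENNReal.top_rpow_of_pos hq0']
    exact le_top
  rcases eq_or_ne b ⊤ with hbt | hbt
  · have : B = ⊤ := by
      by_contra h
      exact (ENNReal.rpow_lt_top_of_nonneg hq0'.le h).ne hbt
    have : S = ⊤ := top_le_iff.mp (this ▸ hBS)
    rw [this, ENNReal.top_rpow_of_pos hq0']
    exact le_top
  -- main case
  have hab0 : a + b ≠ 0 := fun h => ha0 (by simpa using (add_eq_zero.mp h).1)
  have habt : a + b ≠ ⊤ := ENNReal.add_ne_top.mpr ⟨hat, hbt⟩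
  set lam := a / (a + b) with hlam
  set mu := b / (a + b) with hmu
  have hsum : lam + mu = 1 := by
    rw [hlam, hmu, ENNReal.div_add_div_same, ENNReal.div_self hab0 habt]
  have hlt : lam ≠ ⊤ :=
    ne_top_of_le_ne_top ENNReal.one_ne_top (hsum ▸ (self_le_add_right lam mu))
  have hmt : mu ≠ ⊤ :=
    ne_top_of_le_ne_top ENNReal.one_ne_top (hsum ▸ (self_le_add_left mu lam))
  have hpt : ∀ x, lam ^ (1-q) * f x ^ q + mu ^ (1-q) * g x ^ q ≤ (f x + g x) ^ q :=
    fun x => ptwise hq0 hq1 lam mu hlt hmt hsum (f x) (g x)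
  have hint : lam ^ (1-q) * A + mu ^ (1-q) * B ≤ S := by
    calc lam ^ (1-q) * A + mu ^ (1-q) * B
        = ∫⁻ x, (lam ^ (1-q) * f x ^ q + mu ^ (1-q) * g x ^ q) ∂μ := by
          rw [lintegral_add_left (by fun_prop), lintegral_const_mul _ (by fun_prop),
            lintegral_const_mul _ (by fun_prop)]
      _ ≤ S := lintegral_mono hpt
  -- compute LHS of hint = (a+b)^q
  have haq : a ^ q = A := by
    rw [← ENNReal.rpow_mul, one_div_mul_cancel hq0.ne', ENNReal.rpow_one]
  have hbq : b ^ q = B := by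
    rw [← ENNReal.rpow_mul, one_div_mul_cancel hq0.ne', ENNReal.rpow_one]
  have hd0 : ((a+b) ^ (1-q)) ≠ 0 := by
    simp only [Ne, ENNReal.rpow_eq_zero_iff, not_or, not_and]
    exact ⟨fun h => absurd h hab0, fun h => absurd h habt⟩
  have hdt : ((a+b) ^ (1-q)) ≠ ⊤ := by
    simp only [Ne, ENNReal.rpow_eq_top_iff, not_or, not_and]
    exact ⟨fun h => absurd h hab0, fun h => absurd h habt⟩
  have hcalc : lam ^ (1-q) * A + mu ^ (1-q) * B = (a + b) ^ q := by
    have e : ∀ c : ℝ≥0∞, c ≠ 0 → c ≠ ⊤ → (c/(a+b))^(1-q) * c^q = c / (a+b)^(1-q) := by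
      intro c hc0 hct
      rw [ENNReal.div_rpow_of_nonneg _ _ (by linarith), div_eq_mul_inv, div_eq_mul_inv,
        mul_comm (c ^ (1-q)) _, mul_assoc, ← ENNReal.rpow_add _ _ hc0 hct, sub_add_cancel,
        ENNReal.rpow_one, mul_comm]
    rw [← haq, ← hbq, hlam, hmu, e a ha0 hat, e b hb0 hbt, ENNReal.div_add_div_same,
      eq_comm, ENNReal.eq_div_iff hd0 hdt, ← ENNReal.rpow_add _ _ hab0 habt]
    norm_num
  have : (a + b) ^ q ≤ S := hcalc ▸ hint
  calc a + b = ((a+b) ^ q) ^ (1/q) := by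
        rw [← ENNReal.rpow_mul, mul_one_div_cancel hq0.ne', ENNReal.rpow_one]
    _ ≤ S ^ (1/q) := hmono this

lemma glue_chain {M : Type*} [MeasurableSpace M] [StandardBorelSpace M] [Nonempty M]
    (β₁ γ β₂ : Measure (M × M)) [IsProbabilityMeasure β₁] [IsProbabilityMeasure γ]
    [IsProbabilityMeasure β₂]
    (h1 : β₁.snd = γ.fst) (h2 : β₂.fst = γ.snd) :
    ∃ m : Measure ((M × M) × M × M), IsProbabilityMeasure m ∧
      (∀ f : M × M → ℝ≥0∞, Measurable f →
        ∫⁻ p, f (p.2.1, p.1.1) ∂m = ∫⁻ p, f p ∂β₁) ∧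
      (∀ f : M × M → ℝ≥0∞, Measurable f →
        ∫⁻ p, f p.1 ∂m = ∫⁻ p, f p ∂γ) ∧
      (∀ f : M × M → ℝ≥0∞, Measurable f →
        ∫⁻ p, f (p.1.2, p.2.2) ∂m = ∫⁻ p, f p ∂β₂) := by
  set ρ₁ : Measure (M × M) := β₁.map Prod.swap with hρ₁
  haveI : IsProbabilityMeasure ρ₁ := Measure.isProbabilityMeasure_map measurable_swap.aemeasurable
  have hρ₁fst : ρ₁.fst = γ.fst := by
    rw [hρ₁, ← h1, Measure.fst, Measure.snd, Measure.map_map measurable_fst measurable_swap]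
    rfl
  set κ₁ : Kernel M M := ρ₁.condKernel with hκ₁
  set κ₂ : Kernel M M := β₂.condKernel with hκ₂
  have hd1 : γ.fst ⊗ₘ κ₁ = ρ₁ := by rw [← hρ₁fst]; exact ρ₁.disintegrate ρ₁.condKernel
  have hd2 : γ.snd ⊗ₘ κ₂ = β₂ := by rw [← h2]; exact β₂.disintegrate β₂.condKernel
  set K : Kernel (M × M) (M × M) :=
    (κ₁.comap Prod.fst measurable_fst) ×ₖ (κ₂.comap Prod.snd measurable_snd) with hK
  haveI : IsMarkovKernel K := by
    rw [hK]; infer_instance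
  refine ⟨γ ⊗ₘ K, inferInstance, ?_, ?_, ?_⟩
  · intro f hf
    rw [Measure.lintegral_compProd (by fun_prop)]
    have hin : ∀ a : M × M, ∫⁻ b : M × M, f (b.1, a.1) ∂(K a)
        = ∫⁻ x, f (x, a.1) ∂(κ₁ a.1) := by
      intro a
      rw [hK, Kernel.lintegral_prod _ _ _ (by fun_prop)]
      simp only [Kernel.comap_apply]
      refine lintegral_congr fun x => ?_
      rw [lintegral_const, measure_univ, mul_one]
    simp_rw [hin]
    have hgm : Measurable fun y : M => ∫⁻ x, f (x, y) ∂(κ₁ y) :=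
      Measurable.lintegral_kernel_prod_right' (f := fun p : M × M => f (p.2, p.1)) (by fun_prop)
    rw [show (∫⁻ a : M × M, ∫⁻ x, f (x, a.1) ∂(κ₁ a.1) ∂γ)
        = ∫⁻ y, ∫⁻ x, f (x, y) ∂(κ₁ y) ∂(γ.fst) from
      (lintegral_map hgm measurable_fst).symm]
    rw [← Measure.lintegral_compProd (f := fun p : M × M => f (p.2, p.1)) (by fun_prop), hd1,
      hρ₁, lintegral_map (by fun_prop) measurable_swap]
    simp
  · intro f hf
    rw [Measure.lintegral_compProd (by fun_prop)]
    refine lintegral_congr fun a => ?_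
    simp [lintegral_const]
  · intro f hf
    rw [Measure.lintegral_compProd (by fun_prop)]
    have hin : ∀ a : M × M, ∫⁻ b : M × M, f (a.2, b.2) ∂(K a)
        = ∫⁻ x, f (a.2, x) ∂(κ₂ a.2) := by
      intro a
      rw [hK, Kernel.lintegral_prod _ _ _ (by fun_prop)]
      simp only [Kernel.comap_apply]
      rw [lintegral_const, measure_univ, mul_one]
    simp_rw [hin]
    have hgm : Measurable fun y : M => ∫⁻ x, f (y, x) ∂(κ₂ y) :=
      Measurable.lintegral_kernel_prod_right' (f := fun p : M × M => f p) (by fun_prop)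
    rw [show (∫⁻ a : M × M, ∫⁻ x, f (a.2, x) ∂(κ₂ a.2) ∂γ)
        = ∫⁻ y, ∫⁻ x, f (y, x) ∂(κ₂ y) ∂(γ.snd) from
      (lintegral_map hgm measurable_snd).symm]
    rw [← Measure.lintegral_compProd (f := fun p : M × M => f p) (by fun_prop), hd2]
lemma lint_ind {α β : Type*} [MeasurableSpace α] [MeasurableSpace β] (m' : Measure α)
    {g : α → β} (hg : Measurable g) {E : Set β} (hE : MeasurableSet E) :
    ∫⁻ p, E.indicator (1 : β → ℝ≥0∞) (g p) ∂m' = m' (g ⁻¹' E) := by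
  rw [← lintegral_indicator_one (hg hE)]
  refine lintegral_congr fun p => ?_
  by_cases h : g p ∈ E <;> simp [h, Set.indicator]


end Aux

/-- in a causal geodesic space, if η is a probability measure on
timelike ℓ-geodesics whose endpoint coupling is an ℓ_q-optimal timelike coupling
with finite negative cost, then t ↦ (e_t)_# η is a timelike ℓ_q-path. -/
theorem stmt15 {M : Type*} [MetricSpace M] [TopologicalSpace.SeparableSpace M]
    [CompleteSpace M] [MeasurableSpace M] [BorelSpace M]
    (ℓ : M → M → EReal)
    (hrange : ∀ x y, ℓ x y ≤ 0 ∨ ℓ x y = ⊤)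
    (hrefl : ∀ x, ℓ x x ≤ 0)
    (htri : ∀ x y z, ℓ x y < ⊤ → ℓ y z < ⊤ → ℓ x z ≤ ℓ x y + ℓ y z)
    -- causal geodesic space hypotheses:
    (hclosed : IsClosed {p : M × M | ℓ p.1 p.2 ≤ 0})
    (hfin : ∀ x y, max (-(ℓ x y)) 0 ≠ ⊤)
    (hcont : Continuous fun p : M × M => max (-(ℓ p.1 p.2)) 0)
    (hgeo : IsGeodesicSpacetime ℓ)
    (hreg : IsRegularSpacetime ℓ)
    (hKgh : ∀ X Y : Set M, IsCompact X → IsCompact Y →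
      IsCompact ({z | ∃ x ∈ X, ℓ x z ≤ 0} ∩ {z | ∃ y ∈ Y, ℓ z y ≤ 0}))
    (q : ℝ) (hq0 : 0 < q) (hq1 : q ≤ 1)
    (η : Measure (ℝ → M)) [IsProbabilityMeasure η]
    (hTGeo : η (TGeoSet ℓ) = 1)
    -- γ := (e₀ × e₁)_# η is an ℓ_q-optimal timelike coupling:
    (hcausal : IsCausalCoupling ℓ (η.map fun σ => σ 0) (η.map fun σ => σ 1)
      (η.map fun σ => (σ 0, σ 1)))
    (htimelike : (η.map fun σ => (σ 0, σ 1)) {p : M × M | ℓ p.1 p.2 < 0} = 1)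
    (hopt : lqCost ℓ q (η.map fun σ => (σ 0, σ 1)) =
      lqSep ℓ q (η.map fun σ => σ 0) (η.map fun σ => σ 1))
    (hbot : ⊥ < lqSep ℓ q (η.map fun σ => σ 0) (η.map fun σ => σ 1))
    (hneg : lqSep ℓ q (η.map fun σ => σ 0) (η.map fun σ => σ 1) < 0) :
    ∀ s t : ℝ, 0 ≤ s → s < t → t ≤ 1 →
      lqSep ℓ q (η.map fun σ => σ s) (η.map fun σ => σ t) =
        ((t - s : ℝ) : EReal) *
          lqSep ℓ q (η.map fun σ => σ 0) (η.map fun σ => σ 1) := by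
  intro s t hs hst ht1
  -- basic instances
  haveI hne : Nonempty (ℝ → M) := by
    by_contra h
    rw [not_nonempty_iff] at h
    have : η Set.univ = 1 := measure_univ
    rw [Set.univ_eq_empty_iff.mpr h, measure_empty] at this
    exact zero_ne_one this
  haveI : Nonempty M := ⟨Classical.arbitrary (ℝ → M) 0⟩
  haveI : StandardBorelSpace M := inferInstance
  have me : ∀ a : ℝ, Measurable fun σ : ℝ → M => σ a := fun a => measurable_pi_apply a
  have mpair : ∀ a b : ℝ, Measurable fun σ : ℝ → M => (σ a, σ b) :=
    fun a b => (me a).prodMk (me b)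
  haveI hprob : ∀ a : ℝ, IsProbabilityMeasure (η.map fun σ => σ a) :=
    fun a => Measure.isProbabilityMeasure_map (me a).aemeasurable
  -- the weight function
  set F : M × M → ℝ≥0∞ := fun p => ENNReal.ofReal ((max (-(ℓ p.1 p.2)) 0).toReal)
    with hFdef
  have hF : Measurable F := (hcont.measurable.ereal_toReal).ennreal_ofReal
  have hFq : Measurable fun p : M × M => F p ^ q :=
    (ENNReal.continuous_rpow_const.measurable).comp hF
  have hFeval : ∀ x y, ENNReal.ofReal (-(ℓ x y)).toReal = F (x, y) := by
    intro x y
    rcases hrange x y with h | h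
    · have h0 : (0:EReal) ≤ -(ℓ x y) := by
        rw [← neg_zero]; exact EReal.neg_le_neg_iff.mpr h
      rw [hFdef]; simp only [max_eq_left h0]
    · rw [hFdef]; simp only [h]
      norm_num
  have costF : ∀ γ' : Measure (M × M),
      lqCost ℓ q γ' = -((((∫⁻ p, F p ^ q ∂γ') ^ (1 / q) : ℝ≥0∞) : EReal)) := by
    intro γ'
    have : (∫⁻ p, (ENNReal.ofReal (-(ℓ p.1 p.2)).toReal) ^ q ∂γ') = ∫⁻ p, F p ^ q ∂γ' :=
      lintegral_congr fun p => by rw [hFeval p.1 p.2]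
    unfold lqCost
    rw [this]
  have hfinite : ∀ x y, ℓ x y ≠ ⊥ := by
    intro x y h
    apply hfin x y
    rw [h]
    simp
  have hrepr : ∀ x y, ℓ x y ≤ 0 → ∃ r : ℝ, r ≤ 0 ∧ ℓ x y = (r : EReal) := by
    intro x y h
    have hnt : ℓ x y ≠ ⊤ := (h.trans_lt EReal.zero_lt_top).ne
    refine ⟨(ℓ x y).toReal, ?_, (EReal.coe_toReal hnt (hfinite x y)).symm⟩
    have := EReal.coe_toReal hnt (hfinite x y)
    rw [← this] at h
    exact_mod_cast h
  have hFne : ∀ x y (r : ℝ), ℓ x y = (r : EReal) → F (x, y) = ENNReal.ofReal (-r) := by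
    intro x y r h
    rw [hFdef]
    simp only [h, ← EReal.coe_neg]
    rcases le_total (-r) 0 with hr | hr
    · rw [max_eq_right, EReal.toReal_zero, ENNReal.ofReal_zero,
        ENNReal.ofReal_of_nonpos hr]
      exact_mod_cast hr
    · rw [max_eq_left, EReal.toReal_coe]
      exact_mod_cast hr
  -- TGeo pointwise consequences
  have hTG : ∀ σ ∈ TGeoSet ℓ, ∀ a b : ℝ, 0 ≤ a → a < b → b ≤ 1 →
      ℓ (σ a) (σ b) ≤ 0 ∧ F (σ a, σ b) = ENNReal.ofReal (b - a) * F (σ 0, σ 1) := by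
    intro σ hσ a b ha hab hb
    obtain ⟨-, hb', hn', haff⟩ := hσ
    set r01 := (ℓ (σ 0) (σ 1)).toReal with hr01
    have h01 : ℓ (σ 0) (σ 1) = (r01 : EReal) :=
      (EReal.coe_toReal (hn'.trans EReal.zero_lt_top).ne hb'.ne').symm
    have hr01neg : r01 ≤ 0 := by
      rw [h01] at hn'; exact_mod_cast hn'.le
    have heq : ℓ (σ a) (σ b) = (((b - a) * r01 : ℝ) : EReal) := by
      rw [haff a b ha hab hb, h01, EReal.coe_mul]
    have hba : (0:ℝ) ≤ b - a := by linarith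
    constructor
    · rw [heq]
      have : ((b - a) * r01 : ℝ) ≤ 0 := by nlinarith
      exact_mod_cast this
    · rw [hFne _ _ _ heq, hFne _ _ _ h01, ← ENNReal.ofReal_mul hba]
      congr 1
      ring
  -- a.e. machinery
  have hnull : ∀ D : Set (ℝ → M), MeasurableSet D → D ∩ TGeoSet ℓ = ∅ → η D = 0 := by
    intro D hD hdisj
    have hsub : TGeoSet ℓ ⊆ Dᶜ := by
      intro σ hσ hσD
      exact Set.eq_empty_iff_forall_notMem.mp hdisj σ ⟨hσD, hσ⟩
    have h1 : (1:ℝ≥0∞) ≤ η Dᶜ := hTGeo ▸ measure_mono hsub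
    have h2 : η Dᶜ = 1 := le_antisymm prob_le_one h1
    exact (prob_compl_eq_one_iff hD).mp h2
  have haeL : ∀ a b : ℝ, 0 ≤ a → a ≤ b → b ≤ 1 → η {σ : ℝ → M | ¬ ℓ (σ a) (σ b) ≤ 0} = 0 := by
    intro a b ha hab hb
    rcases eq_or_lt_of_le hab with rfl | hlt
    · have hemp : {σ : ℝ → M | ¬ ℓ (σ a) (σ a) ≤ 0} = ∅ :=
        Set.eq_empty_iff_forall_notMem.mpr fun σ h => h (hrefl _)
      rw [hemp]
      exact measure_empty
    · have hDm : MeasurableSet {σ : ℝ → M | ¬ ℓ (σ a) (σ b) ≤ 0} :=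
        (mpair a b) hclosed.measurableSet.compl
      refine hnull _ hDm ?_
      exact Set.eq_empty_iff_forall_notMem.mpr
        fun σ ⟨h, hσ⟩ => h (hTG σ hσ a b ha hlt hb).1
  have haeF : ∀ a b : ℝ, 0 ≤ a → a < b → b ≤ 1 →
      η {σ : ℝ → M | ¬ F (σ a, σ b) = ENNReal.ofReal (b - a) * F (σ 0, σ 1)} = 0 := by
    intro a b ha hab hb
    have hDm : MeasurableSet
        {σ : ℝ → M | ¬ F (σ a, σ b) = ENNReal.ofReal (b - a) * F (σ 0, σ 1)} := by
      have h1 : Measurable fun σ : ℝ → M => F (σ a, σ b) := hF.comp (mpair a b)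
      have h2 : Measurable fun σ : ℝ → M => ENNReal.ofReal (b - a) * F (σ 0, σ 1) :=
        (hF.comp (mpair 0 1)).const_mul _
      exact (measurableSet_eq_fun h1 h2).compl
    refine hnull _ hDm ?_
    exact Set.eq_empty_iff_forall_notMem.mpr
      fun σ ⟨h, hσ⟩ => h (hTG σ hσ a b ha hab hb).2
  -- the basic quantities
  set μ0 : Measure M := η.map (fun σ => σ 0) with hμ0
  set μ1 : Measure M := η.map (fun σ => σ 1) with hμ1
  set μs : Measure M := η.map (fun σ => σ s) with hμs
  set μt : Measure M := η.map (fun σ => σ t) with hμt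
  set A : ℝ≥0∞ := ∫⁻ σ, F (σ 0, σ 1) ^ q ∂η with hA
  set I : ℝ≥0∞ := A ^ (1/q) with hI
  have hmap01 : ∫⁻ p, F p ^ q ∂(η.map fun σ => (σ 0, σ 1)) = A := by
    rw [lintegral_map hFq (mpair 0 1)]
  have hL : lqSep ℓ q μ0 μ1 = -(I : EReal) := by
    rw [← hopt, costF, hmap01]
  have hItop : I ≠ ⊤ := by
    intro h
    rw [hL, h] at hbot
    simp [EReal.coe_ennreal_top] at hbot
  have hI0 : I ≠ 0 := by
    intro h
    rw [hL, h] at hneg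
    simp at hneg
  have hER : ∀ c : ℝ, 0 ≤ c →
      -((ENNReal.ofReal c * I : ℝ≥0∞) : EReal) = (c : EReal) * (-(I : EReal)) := by
    intro c hc
    rw [EReal.coe_ennreal_mul, EReal.coe_ennreal_ofReal, max_eq_left hc,
      show ((c:ℝ):EReal) * -(I:EReal) = -(((c:ℝ):EReal) * (I:EReal)) from by
        rw [mul_comm, EReal.neg_mul, mul_comm]]
  have hFqab : ∀ a b : ℝ, Measurable fun σ : ℝ → M => F (σ a, σ b) ^ q :=
    fun a b => (ENNReal.continuous_rpow_const.measurable).comp (hF.comp (mpair a b))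
  have hseg : ∀ a b : ℝ, 0 ≤ a → a < b → b ≤ 1 →
      ∫⁻ σ, F (σ a, σ b) ^ q ∂η = ENNReal.ofReal (b - a) ^ q * A := by
    intro a b ha hab hb
    have hae : ∀ᵐ σ ∂η, F (σ a, σ b) = ENNReal.ofReal (b - a) * F (σ 0, σ 1) := by
      rw [Filter.eventually_iff, mem_ae_iff]
      have : {σ : ℝ → M | F (σ a, σ b) = ENNReal.ofReal (b - a) * F (σ 0, σ 1)}ᶜ
          = {σ : ℝ → M | ¬ F (σ a, σ b) = ENNReal.ofReal (b - a) * F (σ 0, σ 1)} := rfl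
      rw [this]
      exact haeF a b ha hab hb
    calc ∫⁻ σ, F (σ a, σ b) ^ q ∂η
        = ∫⁻ σ, (ENNReal.ofReal (b - a) * F (σ 0, σ 1)) ^ q ∂η := by
          refine lintegral_congr_ae ?_
          filter_upwards [hae] with σ h
          rw [h]
      _ = ∫⁻ σ, ENNReal.ofReal (b - a) ^ q * F (σ 0, σ 1) ^ q ∂η := by
          refine lintegral_congr fun σ => ?_
          rw [ENNReal.mul_rpow_of_nonneg _ _ hq0.le]
      _ = ENNReal.ofReal (b - a) ^ q * A := by
          rw [lintegral_const_mul _ (hFqab 0 1)]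
  have hpow : ∀ c : ℝ≥0∞, (c ^ q * A) ^ (1/q) = c * I := by
    intro c
    rw [ENNReal.mul_rpow_of_nonneg _ _ (by positivity), ← ENNReal.rpow_mul,
      mul_one_div_cancel hq0.ne', ENNReal.rpow_one, ← hI]
  -- the canonical coupling between μs and μt
  set γst : Measure (M × M) := η.map (fun σ => (σ s, σ t)) with hγst
  haveI : IsProbabilityMeasure γst := Measure.isProbabilityMeasure_map (mpair s t).aemeasurable
  have hγstc : IsCausalCoupling ℓ μs μt γst := by
    refine ⟨?_, ?_, ?_⟩
    · rw [hγst, Measure.map_map measurable_fst (mpair s t)]; rfl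
    · rw [hγst, Measure.map_map measurable_snd (mpair s t)]; rfl
    · have h0 : γst {p : M × M | ℓ p.1 p.2 ≤ 0}ᶜ = 0 := by
        rw [hγst, Measure.map_apply (mpair s t) hclosed.measurableSet.compl]
        exact haeL s t hs hst.le ht1
      exact (prob_compl_eq_zero_iff hclosed.measurableSet).mp h0
  have hcost_st : lqCost ℓ q γst = -((ENNReal.ofReal (t - s) * I : ℝ≥0∞) : EReal) := by
    rw [costF, hγst, lintegral_map hFq (mpair s t), hseg s t hs hst ht1, hpow]
  have hupper : lqSep ℓ q μs μt ≤ ((t - s : ℝ) : EReal) * lqSep ℓ q μ0 μ1 := by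
    have hmem : lqCost ℓ q γst ∈
        {v : EReal | ∃ γ, IsCausalCoupling ℓ μs μt γ ∧ v = lqCost ℓ q γ} := ⟨γst, hγstc, rfl⟩
    refine le_trans (sInf_le hmem) ?_
    rw [hcost_st, hL, hER (t - s) (by linarith)]
  -- lower bound: any causal coupling costs at least (t-s) * L
  have hlower : ∀ v ∈ {v : EReal | ∃ γ, IsCausalCoupling ℓ μs μt γ ∧ v = lqCost ℓ q γ},
      ((t - s : ℝ) : EReal) * lqSep ℓ q μ0 μ1 ≤ v := by
    rintro v ⟨γ, ⟨hγ1, hγ2, hγ3⟩, rfl⟩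
    haveI hγP : IsProbabilityMeasure γ := by
      constructor
      have h := congrArg (fun m : Measure M => m Set.univ) hγ1
      simp only [Measure.map_apply measurable_fst MeasurableSet.univ,
        Set.preimage_univ] at h
      rw [h]
      exact measure_univ
    set β₁ : Measure (M × M) := η.map (fun σ => (σ 0, σ s)) with hβ₁
    set β₂ : Measure (M × M) := η.map (fun σ => (σ t, σ 1)) with hβ₂
    haveI : IsProbabilityMeasure β₁ := Measure.isProbabilityMeasure_map (mpair 0 s).aemeasurable
    haveI : IsProbabilityMeasure β₂ := Measure.isProbabilityMeasure_map (mpair t 1).aemeasurable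
    have h1 : β₁.snd = γ.fst := by
      rw [Measure.snd, Measure.fst, hβ₁, Measure.map_map measurable_snd (mpair 0 s), hγ1]
      rfl
    have h2 : β₂.fst = γ.snd := by
      rw [Measure.fst, Measure.snd, hβ₂, Measure.map_map measurable_fst (mpair t 1), hγ2]
      rfl
    obtain ⟨m, hmP, hm1, hm2, hm3⟩ := glue_chain β₁ γ β₂ h1 h2
    haveI := hmP
    have hBad : MeasurableSet ({p : M × M | ℓ p.1 p.2 ≤ 0}ᶜ) := hclosed.measurableSet.compl
    set Bad : Set (M × M) := {p : M × M | ℓ p.1 p.2 ≤ 0}ᶜ with hBadDef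
    -- a.e. causality along the three pieces
    have e1 : ∀ᵐ p ∂m, ℓ (p.2.1) (p.1.1) ≤ 0 := by
      rw [ae_iff]
      have hset : {p : (M × M) × M × M | ¬ ℓ p.2.1 p.1.1 ≤ 0}
          = (fun p : (M × M) × M × M => (p.2.1, p.1.1)) ⁻¹' Bad := rfl
      rw [hset, ← lint_ind m (by fun_prop) hBad,
        hm1 _ (measurable_one.indicator hBad), lintegral_indicator_one hBad,
        hβ₁, Measure.map_apply (mpair 0 s) hBad]
      exact haeL 0 s le_rfl hs (hst.le.trans ht1)
    have e2 : ∀ᵐ p ∂m, ℓ (p.1.1) (p.1.2) ≤ 0 := by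
      rw [ae_iff]
      have hset : {p : (M × M) × M × M | ¬ ℓ p.1.1 p.1.2 ≤ 0}
          = (fun p : (M × M) × M × M => p.1) ⁻¹' Bad := rfl
      rw [hset, ← lint_ind m (by fun_prop) hBad,
        hm2 _ (measurable_one.indicator hBad), lintegral_indicator_one hBad]
      exact (prob_compl_eq_zero_iff hclosed.measurableSet).mpr hγ3
    have e3 : ∀ᵐ p ∂m, ℓ (p.1.2) (p.2.2) ≤ 0 := by
      rw [ae_iff]
      have hset : {p : (M × M) × M × M | ¬ ℓ p.1.2 p.2.2 ≤ 0}
          = (fun p : (M × M) × M × M => (p.1.2, p.2.2)) ⁻¹' Bad := rfl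
      rw [hset, ← lint_ind m (by fun_prop) hBad,
        hm3 _ (measurable_one.indicator hBad), lintegral_indicator_one hBad,
        hβ₂, Measure.map_apply (mpair t 1) hBad]
      exact haeL t 1 (hs.trans hst.le) ht1 le_rfl
    -- the pointwise chain inequality, a.e.
    have hchain : ∀ᵐ p ∂m, ℓ (p.2.1) (p.2.2) ≤ 0 ∧
        F (p.2.1, p.1.1) + F (p.1.1, p.1.2) + F (p.1.2, p.2.2) ≤ F (p.2.1, p.2.2) := by
      filter_upwards [e1, e2, e3] with p h1' h2' h3'
      obtain ⟨r1, hr1n, hr1⟩ := hrepr _ _ h1'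
      obtain ⟨r2, hr2n, hr2⟩ := hrepr _ _ h2'
      obtain ⟨r3, hr3n, hr3⟩ := hrepr _ _ h3'
      have htop : ∀ {x y : M}, ℓ x y ≤ 0 → ℓ x y < ⊤ :=
        fun h => h.trans_lt EReal.zero_lt_top
      have t1 : ℓ p.2.1 p.1.2 ≤ ℓ p.2.1 p.1.1 + ℓ p.1.1 p.1.2 :=
        htri _ _ _ (htop h1') (htop h2')
      have h12 : ℓ p.2.1 p.1.2 ≤ ((r1 + r2 : ℝ) : EReal) := by
        refine t1.trans ?_
        rw [hr1, hr2, EReal.coe_add]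
      have h12' : ℓ p.2.1 p.1.2 ≤ 0 :=
        h12.trans (by exact_mod_cast (by linarith : (r1 + r2 : ℝ) ≤ 0))
      have t2 : ℓ p.2.1 p.2.2 ≤ ℓ p.2.1 p.1.2 + ℓ p.1.2 p.2.2 :=
        htri _ _ _ (htop h12') (htop h3')
      have h02 : ℓ p.2.1 p.2.2 ≤ ((r1 + r2 + r3 : ℝ) : EReal) := by
        refine t2.trans ?_
        rw [hr3]
        calc ℓ p.2.1 p.1.2 + ((r3 : ℝ) : EReal)
            ≤ ((r1 + r2 : ℝ) : EReal) + ((r3 : ℝ) : EReal) := add_le_add_left h12 _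
          _ = ((r1 + r2 + r3 : ℝ) : EReal) := by rw [← EReal.coe_add]
      have h02' : ℓ p.2.1 p.2.2 ≤ 0 :=
        h02.trans (by exact_mod_cast (by linarith : (r1 + r2 + r3 : ℝ) ≤ 0))
      obtain ⟨r0, hr0n, hr0⟩ := hrepr _ _ h02'
      have hr0le : r0 ≤ r1 + r2 + r3 := by
        rw [hr0] at h02
        exact_mod_cast h02
      refine ⟨h02', ?_⟩
      rw [hFne _ _ _ hr0, hFne _ _ _ hr1, hFne _ _ _ hr2, hFne _ _ _ hr3,
        ← ENNReal.ofReal_add (by linarith) (by linarith),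
        ← ENNReal.ofReal_add (by linarith) (by linarith)]
      exact ENNReal.ofReal_le_ofReal (by linarith)
    -- cost of the three pieces
    set X1 : ℝ≥0∞ := ∫⁻ p : (M × M) × M × M, F (p.2.1, p.1.1) ^ q ∂m with hX1
    set X2 : ℝ≥0∞ := ∫⁻ p : (M × M) × M × M, F (p.1.1, p.1.2) ^ q ∂m with hX2
    set X3 : ℝ≥0∞ := ∫⁻ p : (M × M) × M × M, F (p.1.2, p.2.2) ^ q ∂m with hX3
    set Cst : ℝ≥0∞ := (∫⁻ p, F p ^ q ∂γ) ^ (1/q) with hCst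
    have b2 : X2 = ∫⁻ p, F p ^ q ∂γ := hm2 (fun p => F p ^ q) hFq
    have b1 : ENNReal.ofReal s * I ≤ X1 ^ (1/q) := by
      rcases eq_or_lt_of_le hs with hs0 | hs0
      · rw [← hs0]
        simp
      · have hX1e : X1 = ENNReal.ofReal s ^ q * A := by
          rw [hX1, hm1 (fun p => F p ^ q) hFq, hβ₁, lintegral_map hFq (mpair 0 s),
            hseg 0 s le_rfl hs0 (hst.le.trans ht1)]
          norm_num
        rw [hX1e, hpow]
    have b3 : ENNReal.ofReal (1 - t) * I ≤ X3 ^ (1/q) := by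
      rcases eq_or_lt_of_le ht1 with ht0 | ht0
      · rw [ht0]
        simp
      · have hX3e : X3 = ENNReal.ofReal (1 - t) ^ q * A := by
          rw [hX3, hm3 (fun p => F p ^ q) hFq, hβ₂, lintegral_map hFq (mpair t 1),
            hseg t 1 (hs.trans hst.le) ht0 le_rfl]
        rw [hX3e, hpow]
    -- measurability of the three piece functions
    have mf1 : Measurable fun p : (M × M) × M × M => F (p.2.1, p.1.1) := by fun_prop
    have mf2 : Measurable fun p : (M × M) × M × M => F (p.1.1, p.1.2) := by fun_prop
    have mf3 : Measurable fun p : (M × M) × M × M => F (p.1.2, p.2.2) := by fun_prop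
    -- reverse Minkowski chain
    have rv1 := revMink m hq0 hq1 _ _ mf1 mf2
    have rv2 := revMink m hq0 hq1 _ _ (mf1.add mf2) mf3
    have hmono_int : (∫⁻ p : (M × M) × M × M,
        ((F (p.2.1, p.1.1) + F (p.1.1, p.1.2)) + F (p.1.2, p.2.2)) ^ q ∂m)
          ≤ ∫⁻ p : (M × M) × M × M, F (p.2.1, p.2.2) ^ q ∂m := by
      refine lintegral_mono_ae ?_
      filter_upwards [hchain] with p hp
      exact ENNReal.rpow_le_rpow hp.2 hq0.le
    -- the (x0,x1)-marginal is a causal coupling of μ0 and μ1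
    have hfst : m.map (fun p : (M × M) × M × M => p.2.1) = μ0 := by
      refine Measure.ext fun E hE => ?_
      rw [Measure.map_apply (by fun_prop) hE]
      have h := hm1 (fun x : M × M => E.indicator 1 x.1)
        ((measurable_one.indicator hE).comp measurable_fst)
      calc m ((fun p : (M × M) × M × M => p.2.1) ⁻¹' E)
          = ∫⁻ p, E.indicator 1 ((fun p : (M × M) × M × M => p.2.1) p) ∂m :=
            (lint_ind m (by fun_prop) hE).symm
        _ = ∫⁻ x : M × M, E.indicator 1 x.1 ∂β₁ := h
        _ = β₁ (Prod.fst ⁻¹' E) := lint_ind β₁ measurable_fst hE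
        _ = η ((fun σ : ℝ → M => σ 0) ⁻¹' E) := by
            rw [hβ₁, Measure.map_apply (mpair 0 s) (measurable_fst hE)]
            rfl
        _ = μ0 E := (Measure.map_apply (me 0) hE).symm
    have hsnd : m.map (fun p : (M × M) × M × M => p.2.2) = μ1 := by
      refine Measure.ext fun E hE => ?_
      rw [Measure.map_apply (by fun_prop) hE]
      have h := hm3 (fun x : M × M => E.indicator 1 x.2)
        ((measurable_one.indicator hE).comp measurable_snd)
      calc m ((fun p : (M × M) × M × M => p.2.2) ⁻¹' E)
          = ∫⁻ p, E.indicator 1 ((fun p : (M × M) × M × M => p.2.2) p) ∂m :=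
            (lint_ind m (by fun_prop) hE).symm
        _ = ∫⁻ x : M × M, E.indicator 1 x.2 ∂β₂ := h
        _ = β₂ (Prod.snd ⁻¹' E) := lint_ind β₂ measurable_snd hE
        _ = η ((fun σ : ℝ → M => σ 1) ⁻¹' E) := by
            rw [hβ₂, Measure.map_apply (mpair t 1) (measurable_snd hE)]
            rfl
        _ = μ1 E := (Measure.map_apply (me 1) hE).symm
    set ν : Measure (M × M) := m.map (fun p : (M × M) × M × M => (p.2.1, p.2.2)) with hν
    haveI : IsProbabilityMeasure ν := Measure.isProbabilityMeasure_map (by fun_prop)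
    have hνc : IsCausalCoupling ℓ μ0 μ1 ν := by
      refine ⟨?_, ?_, ?_⟩
      · rw [hν, Measure.map_map measurable_fst (by fun_prop)]
        exact hfst
      · rw [hν, Measure.map_map measurable_snd (by fun_prop)]
        exact hsnd
      · have h0 : ν Bad = 0 := by
          rw [hν, Measure.map_apply (by fun_prop) hBad]
          have hset : (fun p : (M × M) × M × M => (p.2.1, p.2.2)) ⁻¹' Bad
              = {p : (M × M) × M × M | ¬ ℓ p.2.1 p.2.2 ≤ 0} := rfl
          rw [hset]
          exact ae_iff.mp (hchain.mono fun p hp => hp.1)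
        exact (prob_compl_eq_zero_iff hclosed.measurableSet).mp h0
    have hJ : (∫⁻ p : (M × M) × M × M, F (p.2.1, p.2.2) ^ q ∂m) ^ (1/q) ≤ I := by
      have hle : lqSep ℓ q μ0 μ1 ≤ lqCost ℓ q ν := sInf_le ⟨ν, hνc, rfl⟩
      rw [hL, costF] at hle
      have hmapν : ∫⁻ p, F p ^ q ∂ν = ∫⁻ p : (M × M) × M × M, F (p.2.1, p.2.2) ^ q ∂m := by
        rw [hν, lintegral_map hFq (by fun_prop)]
      rw [hmapν] at hle
      exact EReal.coe_ennreal_le_coe_ennreal_iff.mp (EReal.neg_le_neg_iff.mp hle)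
    -- combine
    have hsum : ENNReal.ofReal s * I + Cst + ENNReal.ofReal (1 - t) * I ≤ I := by
      have step1 : ENNReal.ofReal s * I + Cst + ENNReal.ofReal (1 - t) * I
          ≤ X1 ^ (1/q) + X2 ^ (1/q) + X3 ^ (1/q) := by
        refine add_le_add (add_le_add b1 (le_of_eq ?_)) b3
        rw [hCst, b2]
      refine step1.trans ?_
      calc X1 ^ (1/q) + X2 ^ (1/q) + X3 ^ (1/q)
          ≤ (∫⁻ p : (M × M) × M × M,
              (F (p.2.1, p.1.1) + F (p.1.1, p.1.2)) ^ q ∂m) ^ (1/q) + X3 ^ (1/q) :=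
            add_le_add_left rv1 _
        _ ≤ (∫⁻ p : (M × M) × M × M,
              ((F (p.2.1, p.1.1) + F (p.1.1, p.1.2)) + F (p.1.2, p.2.2)) ^ q ∂m) ^ (1/q) := rv2
        _ ≤ (∫⁻ p : (M × M) × M × M, F (p.2.1, p.2.2) ^ q ∂m) ^ (1/q) :=
            ENNReal.rpow_le_rpow hmono_int (by positivity)
        _ ≤ I := hJ
    have hIsplit : ENNReal.ofReal s * I + ENNReal.ofReal (t - s) * I
        + ENNReal.ofReal (1 - t) * I = I := by
      rw [← add_mul, ← add_mul, ← ENNReal.ofReal_add hs (by linarith),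
        ← ENNReal.ofReal_add (by linarith) (by linarith)]
      have he : s + (t - s) + (1 - t) = 1 := by ring
      rw [he, ENNReal.ofReal_one, one_mul]
    have hCle : Cst ≤ ENNReal.ofReal (t - s) * I := by
      have hXfin : ENNReal.ofReal s * I + ENNReal.ofReal (1 - t) * I ≠ ⊤ :=
        ENNReal.add_ne_top.mpr ⟨ENNReal.mul_ne_top ENNReal.ofReal_ne_top hItop,
          ENNReal.mul_ne_top ENNReal.ofReal_ne_top hItop⟩
      have h' : (ENNReal.ofReal s * I + ENNReal.ofReal (1 - t) * I) + Cst
          ≤ (ENNReal.ofReal s * I + ENNReal.ofReal (1 - t) * I)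
            + ENNReal.ofReal (t - s) * I := by
        calc (ENNReal.ofReal s * I + ENNReal.ofReal (1 - t) * I) + Cst
            = ENNReal.ofReal s * I + Cst + ENNReal.ofReal (1 - t) * I := by ring
          _ ≤ I := hsum
          _ = ENNReal.ofReal s * I + ENNReal.ofReal (t - s) * I
              + ENNReal.ofReal (1 - t) * I := hIsplit.symm
          _ = (ENNReal.ofReal s * I + ENNReal.ofReal (1 - t) * I)
              + ENNReal.ofReal (t - s) * I := by ring
      exact (ENNReal.add_le_add_iff_left hXfin).mp h'
    rw [costF, hL, ← hER (t - s) (by linarith)]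
    exact EReal.neg_le_neg_iff.mpr (EReal.coe_ennreal_le_coe_ennreal_iff.mpr hCle)
  exact le_antisymm hupper (le_sInf hlower)
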